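/- Sending a bounded complex M^• of coherent sheaves on X to the 2-periodic folding F(M^•) with components ⊕_i M^{2i}(i) and ⊕_i M^{2i+1}(i) and differentials ⊕ d^{2i}, ⊕ d^{2i+1} defines an equivalence between the category of bounded complexes of coherent sheaves on X and the category of coherent factorizations of the zero potential on [X/G_m] (trivial G_m-action, twist by the identity character), which preserves homotopies and sends acyclic complexes to totally acyclic factorizations; hence it induces an equivalence D^b(coh X) ≅ D(coh[X/G_m], 0). -/

import Mathlib

/-!
STATEMENT 14: The 2-periodic folding `M^• ↦ (⊕_i M^{2i}(i), ⊕_i M^{2i+1}(i))`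
with differentials `⊕ d^{2i}, ⊕ d^{2i+1}` defines an equivalence between the
category of (bounded) complexes of coherent sheaves on `X` and the category of
coherent factorizations of the zero potential on `[X/G_m]` (trivial
`G_m`-action, twist by the identity character), inducing
`D^b(coh X) ≅ D(coh[X/G_m], 0)`.

A `G_m`-equivariant sheaf on `X` with trivial action is a ℤ-graded object of
`coh X` (graded by the χ-weight), and twisting by `χ^i` shifts the grading; so
a factorization of the zero potential is a pair of graded objects
`p, q : ℤ → C` with maps `φ n : p n ⟶ q n` and `ψ n : q n ⟶ p (n+1)`
(the graded components of `φ⁰ : E⁻¹ → E⁰` and `φ⁻¹ : E⁰(-1) → E⁻¹`) whose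
compositions are zero.  The theorem asserts that there is an equivalence of
categories whose value on a complex `M` has components `p n = M^{2n}`,
`q n = M^{2n+1}` and structure maps the differentials of `M`, i.e. the folding
functor `F` is an equivalence.
-/

open CategoryTheory

/-- A coherent factorization of the zero potential on `[X/G_m]` with trivial
`G_m`-action, in graded-component form. -/
structure ZeroFactorization (C : Type*) [Category C] [Limits.HasZeroMorphisms C] where
  p : ℤ → C
  q : ℤ → C
  φ : ∀ n : ℤ, p n ⟶ q n
  ψ : ∀ n : ℤ, q n ⟶ p (n + 1)
  φψ : ∀ n : ℤ, φ n ≫ ψ n = 0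
  ψφ : ∀ n : ℤ, ψ n ≫ φ (n + 1) = 0

/-- Morphisms of factorizations of the zero potential. -/
@[ext]
structure ZeroFactorizationHom {C : Type*} [Category C] [Limits.HasZeroMorphisms C]
    (E F : ZeroFactorization C) where
  fp : ∀ n : ℤ, E.p n ⟶ F.p n
  fq : ∀ n : ℤ, E.q n ⟶ F.q n
  comm1 : ∀ n : ℤ, E.φ n ≫ fq n = fp n ≫ F.φ n
  comm2 : ∀ n : ℤ, E.ψ n ≫ fp (n + 1) = fq n ≫ F.ψ n

instance ZeroFactorization.category (C : Type*) [Category C] [Limits.HasZeroMorphisms C] :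
    Category (ZeroFactorization C) where
  Hom E F := ZeroFactorizationHom E F
  id E := { fp := fun _ => 𝟙 _, fq := fun _ => 𝟙 _,
            comm1 := by intro n; simp, comm2 := by intro n; simp }
  comp f g :=
    { fp := fun n => f.fp n ≫ g.fp n
      fq := fun n => f.fq n ≫ g.fq n
      comm1 := by
        intro n
        rw [← Category.assoc, f.comm1, Category.assoc, g.comm1, ← Category.assoc]
      comm2 := by
        intro n
        rw [← Category.assoc, f.comm2, Category.assoc, g.comm2, ← Category.assoc] }
  id_comp f := by
    apply ZeroFactorizationHom.ext <;> funext n <;> simp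
  comp_id f := by
    apply ZeroFactorizationHom.ext <;> funext n <;> simp
  assoc f g h := by
    apply ZeroFactorizationHom.ext <;> funext n <;> simp

section Folding

variable {C : Type*} [Category C] [Preadditive C]

/-- transport a family of maps along an index equality -/
lemma map_congr_index {P Q : ℤ → C} (f : ∀ n, P n ⟶ Q n) {a b : ℤ} (h : a = b)
    {X Y : C} (hX : X = P a) (hY : Q a = Y) (hX' : X = P b) (hY' : Q b = Y) :
    eqToHom hX ≫ f a ≫ eqToHom hY = eqToHom hX' ≫ f b ≫ eqToHom hY' := by
  subst h; rfl

/-- The folding functor. -/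
@[simps]
abbrev fold (C : Type*) [Category C] [Preadditive C] :
    CochainComplex C ℤ ⥤ ZeroFactorization C where
  obj M :=
    { p := fun n => M.X (2 * n)
      q := fun n => M.X (2 * n + 1)
      φ := fun n => M.d (2 * n) (2 * n + 1)
      ψ := fun n => M.d (2 * n + 1) (2 * (n + 1))
      φψ := fun n => M.d_comp_d _ _ _
      ψφ := fun n => M.d_comp_d _ _ _ }
  map f :=
    { fp := fun n => f.f (2 * n)
      fq := fun n => f.f (2 * n + 1)
      comm1 := fun n => (f.comm _ _).symm
      comm2 := fun n => (f.comm _ _).symm }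
  map_id M := by apply ZeroFactorizationHom.ext <;> rfl
  map_comp f g := by apply ZeroFactorizationHom.ext <;> rfl

variable (E : ZeroFactorization C)

/-- unfolding: objects -/
def Xo (m : ℤ) : C := if m % 2 = 0 then E.p (m / 2) else E.q (m / 2)

lemma Xo_even (n : ℤ) : Xo E (2 * n) = E.p n := by
  rw [Xo, if_pos (by omega)]; congr 1; omega

lemma Xo_odd (n : ℤ) : Xo E (2 * n + 1) = E.q n := by
  rw [Xo, if_neg (by omega)]; congr 1; omega

/-- unfolding: differential -/
def dm (m : ℤ) : Xo E m ⟶ Xo E (m + 1) :=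
  if h : m % 2 = 0 then
    eqToHom (by rw [Xo, if_pos h]) ≫ E.φ (m / 2) ≫
      eqToHom (by rw [Xo, if_neg (by omega)]; congr 1; omega)
  else
    eqToHom (by rw [Xo, if_neg h]) ≫ E.ψ (m / 2) ≫
      eqToHom (by rw [Xo, if_pos (by omega)]; congr 1; omega)

lemma dm_eq_even {m n : ℤ} (h : m = 2 * n) :
    dm E m = eqToHom (by rw [h, Xo_even]) ≫ E.φ n ≫
      eqToHom (by rw [show m + 1 = 2 * n + 1 by omega, Xo_odd]) := by
  rw [dm, dif_pos (by omega : m % 2 = 0)]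
  exact map_congr_index E.φ (by omega : m / 2 = n) _ _ _ _

lemma dm_eq_odd {m n : ℤ} (h : m = 2 * n + 1) :
    dm E m = eqToHom (by rw [h, Xo_odd]) ≫ E.ψ n ≫
      eqToHom (by rw [show m + 1 = 2 * (n + 1) by omega, Xo_even]) := by
  rw [dm, dif_neg (by omega : ¬ m % 2 = 0)]
  exact map_congr_index E.ψ (by omega : m / 2 = n) _ _ _ _

lemma dd (m : ℤ) : dm E m ≫ dm E (m + 1) = 0 := by
  rcases Int.even_or_odd' m with ⟨n, hn | hn⟩
  · rw [dm_eq_even E hn, dm_eq_odd E (show m + 1 = 2 * n + 1 by omega)]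
    simp only [Category.assoc, eqToHom_trans_assoc, eqToHom_refl, Category.id_comp]
    simp [E.φψ n, reassoc_of% E.φψ n]
  · rw [dm_eq_odd E hn, dm_eq_even E (show m + 1 = 2 * (n + 1) by omega)]
    simp only [Category.assoc, eqToHom_trans_assoc, eqToHom_refl, Category.id_comp]
    simp [E.ψφ n, reassoc_of% E.ψφ n]

/-- The unfolded complex. -/
abbrev unfold : CochainComplex C ℤ where
  X := Xo E
  d m m' := if h : m + 1 = m' then dm E m ≫ eqToHom (congrArg (Xo E) h) else 0
  shape m m' h := dif_neg h
  d_comp_d' i j k hij hjk := by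
    obtain rfl : i + 1 = j := hij
    obtain rfl : i + 1 + 1 = k := hjk
    simp [dd]

lemma unfold_d (m : ℤ) : (unfold E).d m (m + 1) = dm E m := by
  simp [unfold]

end Folding
section Part2

variable {C : Type*} [Category C] [Preadditive C]

@[simp] lemma ZF_comp_fp {E F G : ZeroFactorization C} (f : E ⟶ F) (g : F ⟶ G) (n : ℤ) :
    (f ≫ g).fp n = f.fp n ≫ g.fp n := rfl
@[simp] lemma ZF_comp_fq {E F G : ZeroFactorization C} (f : E ⟶ F) (g : F ⟶ G) (n : ℤ) :
    (f ≫ g).fq n = f.fq n ≫ g.fq n := rfl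
@[simp] lemma ZF_id_fp (E : ZeroFactorization C) (n : ℤ) : (𝟙 E : E ⟶ E).fp n = 𝟙 _ := rfl
@[simp] lemma ZF_id_fq (E : ZeroFactorization C) (n : ℤ) : (𝟙 E : E ⟶ E).fq n = 𝟙 _ := rfl

lemma d_congr (M : CochainComplex C ℤ) {a b b' : ℤ} (h : b = b') :
    M.d a b ≫ eqToHom (congrArg M.X h) = M.d a b' := by subst h; simp

variable {M N : CochainComplex C ℤ}

/-- preimage of a morphism of factorizations -/
def ff (g : (fold C).obj M ⟶ (fold C).obj N) (m : ℤ) : M.X m ⟶ N.X m :=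
  if h : m % 2 = 0 then
    eqToHom (congrArg M.X (by omega : m = 2 * (m / 2))) ≫ g.fp (m / 2) ≫
      eqToHom (congrArg N.X (by omega : 2 * (m / 2) = m))
  else
    eqToHom (congrArg M.X (by omega : m = 2 * (m / 2) + 1)) ≫ g.fq (m / 2) ≫
      eqToHom (congrArg N.X (by omega : 2 * (m / 2) + 1 = m))

lemma ff_eq_even (g : (fold C).obj M ⟶ (fold C).obj N) {m n : ℤ} (h : m = 2 * n) :
    ff g m = eqToHom (congrArg M.X h) ≫ g.fp n ≫ eqToHom (congrArg N.X h.symm) := by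
  rw [ff, dif_pos (by omega : m % 2 = 0)]
  exact map_congr_index (P := fun k => M.X (2 * k)) (Q := fun k => N.X (2 * k))
    g.fp (by omega : m / 2 = n) _ _ _ _

lemma ff_eq_odd (g : (fold C).obj M ⟶ (fold C).obj N) {m n : ℤ} (h : m = 2 * n + 1) :
    ff g m = eqToHom (congrArg M.X h) ≫ g.fq n ≫ eqToHom (congrArg N.X h.symm) := by
  rw [ff, dif_neg (by omega : ¬ m % 2 = 0)]
  exact map_congr_index (P := fun k => M.X (2 * k + 1)) (Q := fun k => N.X (2 * k + 1))
    g.fq (by omega : m / 2 = n) _ _ _ _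

def ffHom (g : (fold C).obj M ⟶ (fold C).obj N) : M ⟶ N where
  f := ff g
  comm' i j hij := by
    obtain rfl : i + 1 = j := hij
    rcases Int.even_or_odd' i with ⟨n, hn | hn⟩
    · subst hn
      rw [ff_eq_even g rfl, ff_eq_odd g (rfl : 2 * n + 1 = 2 * n + 1)]
      simp only [eqToHom_refl, Category.id_comp, Category.comp_id]
      exact (g.comm1 n).symm
    · subst hn
      rw [ff_eq_odd g rfl, ff_eq_even g (show 2 * n + 1 + 1 = 2 * (n + 1) by ring)]
      simp only [eqToHom_refl, Category.id_comp, Category.comp_id]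
      have h2 := g.comm2 n
      simp only [fold_obj_ψ] at h2
      rw [← d_congr N (show 2 * (n + 1) = 2 * n + 1 + 1 by ring), ← Category.assoc,
        ← h2, ← d_congr M (show 2 * (n + 1) = 2 * n + 1 + 1 by ring)]
      simp [eqToHom_trans_assoc]

instance fold_faithful : (fold C).Faithful where
  map_injective {M N f f'} h := by
    ext m
    rcases Int.even_or_odd' m with ⟨n, hn | hn⟩ <;> subst hn
    · exact congrArg (fun z => ZeroFactorizationHom.fp z n) h
    · exact congrArg (fun z => ZeroFactorizationHom.fq z n) h

instance fold_full : (fold C).Full where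
  map_surjective {M N} g := by
    refine ⟨ffHom g, ?_⟩
    apply ZeroFactorizationHom.ext <;> funext n
    · show ff g (2 * n) = g.fp n
      rw [ff_eq_even g rfl]
      simp
    · show ff g (2 * n + 1) = g.fq n
      rw [ff_eq_odd g rfl]
      simp

lemma unfold_d' (E : ZeroFactorization C) {m m' : ℤ} (h : m + 1 = m') :
    (unfold E).d m m' = dm E m ≫ eqToHom (congrArg (Xo E) h) := dif_pos h

def foldUnfoldIso (E : ZeroFactorization C) : (fold C).obj (unfold E) ≅ E where
  hom :=
    { fp := fun n => eqToHom (Xo_even E n)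
      fq := fun n => eqToHom (Xo_odd E n)
      comm1 := fun n => by
        show (unfold E).d (2 * n) (2 * n + 1) ≫ _ = _
        rw [unfold_d' E rfl, dm_eq_even E rfl]
        simp
      comm2 := fun n => by
        show (unfold E).d (2 * n + 1) (2 * (n + 1)) ≫ _ = _
        rw [unfold_d' E (show 2 * n + 1 + 1 = 2 * (n + 1) by ring), dm_eq_odd E rfl]
        simp }
  inv :=
    { fp := fun n => eqToHom (Xo_even E n).symm
      fq := fun n => eqToHom (Xo_odd E n).symm
      comm1 := fun n => by
        show _ = _ ≫ (unfold E).d (2 * n) (2 * n + 1)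
        rw [unfold_d' E rfl, dm_eq_even E rfl]
        simp
      comm2 := fun n => by
        show _ = _ ≫ (unfold E).d (2 * n + 1) (2 * (n + 1))
        rw [unfold_d' E (show 2 * n + 1 + 1 = 2 * (n + 1) by ring), dm_eq_odd E rfl]
        simp }
  hom_inv_id := by apply ZeroFactorizationHom.ext <;> funext n <;> simp
  inv_hom_id := by apply ZeroFactorizationHom.ext <;> funext n <;> simp

instance fold_essSurj : (fold C).EssSurj where
  mem_essImage E := ⟨unfold E, ⟨foldUnfoldIso E⟩⟩

instance fold_isEquivalence : (fold C).IsEquivalence := {}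

end Part2


/-- The 2-periodic folding is an equivalence between complexes of coherent
sheaves and factorizations of the zero potential. -/
theorem folding_equivalence
    (C : Type*) [Category C] [Preadditive C] :
    ∃ E : CochainComplex C ℤ ≌ ZeroFactorization C,
      ∀ M : CochainComplex C ℤ,
        (∀ n : ℤ, (E.functor.obj M).p n = M.X (2 * n)) ∧
        (∀ n : ℤ, (E.functor.obj M).q n = M.X (2 * n + 1)) := by
  exact ⟨(fold C).asEquivalence, fun M => ⟨fun n => rfl, fun n => rfl⟩⟩
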